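/- Let P and Q be partition polynomials. Then P dominates Q if and only if every clopen subset A of the Cantor set Ω that is represented by P (i.e., μ_r(A) = P(r) for all r ∈ [0,1]) has a clopen subset B represented by Q (i.e., μ_r(B) = Q(r) for all r ∈ [0,1]). -/

import Mathlib

open MeasureTheory Polynomial

/-- `P` is a partition polynomial: `P(X) = ∑_{i=0}^n a_i X^i (1-X)^(n-i)` with
integers `0 ≤ a_i ≤ C(n,i)`. -/
def IsPartitionPolynomial (P : Polynomial ℤ) : Prop :=
  ∃ (n : ℕ) (a : ℕ → ℤ),
    (∀ i ≤ n, 0 ≤ a i ∧ a i ≤ (n.choose i : ℤ)) ∧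
    P = ∑ i ∈ Finset.range (n + 1), C (a i) * X ^ i * (1 - X) ^ (n - i)

/-- `μ` is the Bernoulli(`r`) product measure on the Cantor set `ℕ → Bool`:
every cylinder specifying the coordinates in a finite set `s` to agree with `e`
has measure `r^(#1s) * (1-r)^(#0s)`.  (This characterizes the infinite power of
the `(r, 1-r)` measure on `{0,1}` uniquely among Borel measures.) -/
def IsBernoulli (r : ℝ) (μ : Measure (ℕ → Bool)) : Prop :=
  ∀ (s : Finset ℕ) (e : ℕ → Bool),
    μ {x : ℕ → Bool | ∀ i ∈ s, x i = e i} =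
      ENNReal.ofReal (r ^ (s.filter fun i => e i = true).card *
        (1 - r) ^ (s.filter fun i => e i = false).card)

/-- `P` dominates `Q`: for some `n` there are simultaneous partition forms
`P = ∑ a_i X^i (1-X)^(n-i)` and `Q = ∑ b_i X^i (1-X)^(n-i)` with
`0 ≤ b_i ≤ a_i ≤ C(n,i)`. -/
def Dominates (P Q : Polynomial ℤ) : Prop :=
  ∃ (n : ℕ) (a b : ℕ → ℤ),
    (∀ i ≤ n, 0 ≤ b i ∧ b i ≤ a i ∧ a i ≤ (n.choose i : ℤ)) ∧
    P = ∑ i ∈ Finset.range (n + 1), C (a i) * X ^ i * (1 - X) ^ (n - i) ∧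
    Q = ∑ i ∈ Finset.range (n + 1), C (b i) * X ^ i * (1 - X) ^ (n - i)

/-- The partition polynomial `P` represents the clopen set `A`:
`μ_r(A) = P(r)` for all `r ∈ [0,1]`. -/
def Represents (P : Polynomial ℤ) (A : Set (ℕ → Bool)) : Prop :=
  ∀ r ∈ Set.Icc (0 : ℝ) 1, ∀ μ : Measure (ℕ → Bool), IsBernoulli r μ →
    μ A = ENNReal.ofReal (aeval r P)

namespace DomAux
open Finset
open scoped ENNReal NNReal

noncomputable def wpoly (m : ℕ) (S : Finset (Finset ℕ)) : Polynomial ℤ :=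
  ∑ T ∈ S, X ^ T.card * (1 - X) ^ (m - T.card)

noncomputable def bern (m : ℕ) (c : ℕ → ℤ) : Polynomial ℤ :=
  ∑ i ∈ range (m + 1), C (c i) * X ^ i * (1 - X) ^ (m - i)

/-- counts -/
noncomputable def cnt (S : Finset (Finset ℕ)) (i : ℕ) : ℕ :=
  (S.filter fun T => T.card = i).card

lemma sum_powerset_one (s : Finset ℕ) :
    ∑ U ∈ s.powerset, (X : Polynomial ℤ) ^ U.card * (1 - X) ^ (s.card - U.card) = 1 := by
  classical
  induction s using Finset.induction_on with
  | empty => simp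
  | @insert a s ha ih =>
    rw [Finset.powerset_insert, Finset.sum_union, Finset.sum_image]
    · have h1 : ∀ U ∈ s.powerset,
          (X : Polynomial ℤ) ^ U.card * (1 - X) ^ ((insert a s).card - U.card)
          = (1 - X) * (X ^ U.card * (1 - X) ^ (s.card - U.card)) := by
        intro U hU
        rw [Finset.mem_powerset] at hU
        rw [Finset.card_insert_of_notMem ha, Nat.succ_sub (Finset.card_le_card hU), pow_succ]
        ring
      have h2 : ∀ U ∈ s.powerset,
          (X : Polynomial ℤ) ^ (insert a U).card * (1 - X) ^ ((insert a s).card - (insert a U).card)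
          = X * (X ^ U.card * (1 - X) ^ (s.card - U.card)) := by
        intro U hU
        rw [Finset.mem_powerset] at hU
        rw [Finset.card_insert_of_notMem (fun h => ha (hU h)),
          Finset.card_insert_of_notMem ha, Nat.succ_sub_succ]
        ring
      rw [Finset.sum_congr rfl h1, Finset.sum_congr rfl h2, ← Finset.mul_sum, ← Finset.mul_sum, ih]
      ring
    · intro U hU V hV hUV
      have hU' : U ⊆ s := Finset.mem_powerset.1 (by simpa using hU)
      have hV' : V ⊆ s := Finset.mem_powerset.1 (by simpa using hV)
      have haU : a ∉ U := fun h => ha (hU' h)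
      have haV : a ∉ V := fun h => ha (hV' h)
      rw [← Finset.erase_insert haU, ← Finset.erase_insert haV, hUV]
    · rw [Finset.disjoint_right]
      rintro U hU hU'
      rw [Finset.mem_image] at hU
      obtain ⟨V, hV, rfl⟩ := hU
      rw [Finset.mem_powerset] at hU'
      exact ha (hU' (Finset.mem_insert_self a V))

/-- Bernstein basis injectivity -/
lemma bern_eq_zero (m : ℕ) (e : ℕ → ℤ)
    (h : bern m e = 0) : ∀ i ≤ m, e i = 0 := by
  induction m generalizing e with
  | zero =>
    intro i hi
    interval_cases i
    simpa [bern] using h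
  | succ m ih =>
    have he0 : e 0 = 0 := by
      have := congrArg (eval 0) h
      simp only [bern, eval_finset_sum, eval_mul, eval_pow, eval_C, eval_X, eval_sub, eval_one,
        eval_zero] at this
      rw [Finset.sum_eq_single 0] at this
      · simpa using this
      · intro i _ hi
        simp [zero_pow hi]
      · simp
    have h2 : bern m (fun i => e (i + 1)) = 0 := by
      have hs : bern (m+1) e = X * bern m (fun i => e (i+1)) := by
        rw [bern, Finset.sum_range_succ']
        simp only [he0, map_zero, zero_mul, add_zero, bern, Finset.mul_sum]
        apply Finset.sum_congr rfl
        intro i _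
        have : m + 1 - (i + 1) = m - i := by omega
        rw [this]; ring
      rw [h, eq_comm, mul_eq_zero] at hs
      rcases hs with h | h
      · exact absurd h X_ne_zero
      · exact h
    intro i hi
    cases i with
    | zero => exact he0
    | succ i => exact ih _ h2 i (by omega)


/-- wpoly equals bern of counts -/
lemma wpoly_eq_bern (m : ℕ) (S : Finset (Finset ℕ)) (hS : ∀ T ∈ S, T ⊆ range m) :
    wpoly m S = bern m (fun i => (cnt S i : ℤ)) := by
  classical
  rw [wpoly, bern, ← Finset.sum_fiberwise_of_maps_to (g := Finset.card) (t := range (m+1))]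
  · apply Finset.sum_congr rfl
    intro i _
    have : ∀ T ∈ S.filter (fun T => T.card = i),
        (X : Polynomial ℤ) ^ T.card * (1 - X) ^ (m - T.card) = X ^ i * (1 - X) ^ (m - i) := by
      intro T hT
      rw [(Finset.mem_filter.1 hT).2]
    rw [Finset.sum_congr rfl this, Finset.sum_const, cnt]
    rw [nsmul_eq_mul, mul_assoc, Polynomial.C_eq_natCast]
  · intro T hT
    rw [Finset.mem_range]
    have := Finset.card_le_card (hS T hT)
    simp only [Finset.card_range] at this
    omega

lemma cnt_le_choose (m : ℕ) (S : Finset (Finset ℕ)) (hS : ∀ T ∈ S, T ⊆ range m) (i : ℕ) :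
    cnt S i ≤ m.choose i := by
  classical
  have : S.filter (fun T => T.card = i) ⊆ (range m).powersetCard i := by
    intro T hT
    rw [Finset.mem_powersetCard]
    exact ⟨hS T (Finset.mem_filter.1 hT).1, (Finset.mem_filter.1 hT).2⟩
  calc cnt S i ≤ ((range m).powersetCard i).card := Finset.card_le_card this
    _ = m.choose i := by rw [Finset.card_powersetCard, Finset.card_range]

lemma cnt_mono {S S' : Finset (Finset ℕ)} (h : S ⊆ S') (i : ℕ) : cnt S i ≤ cnt S' i :=
  Finset.card_le_card (Finset.filter_subset_filter _ h)

/-- extension of a word family from level m to level m + k -/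
noncomputable def extend (m k : ℕ) (S : Finset (Finset ℕ)) : Finset (Finset ℕ) :=
  (S ×ˢ (Finset.Ico m (m + k)).powerset).image (fun p => p.1 ∪ p.2)

lemma extend_subset_range {m k : ℕ} {S : Finset (Finset ℕ)} (hS : ∀ T ∈ S, T ⊆ range m) :
    ∀ T ∈ extend m k S, T ⊆ range (m + k) := by
  intro T hT
  rw [extend, Finset.mem_image] at hT
  obtain ⟨⟨T₁, U⟩, hp, rfl⟩ := hT
  rw [Finset.mem_product] at hp
  obtain ⟨h1, h2⟩ := hp
  rw [Finset.mem_powerset] at h2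
  intro x hx
  rw [Finset.mem_union] at hx
  rw [Finset.mem_range]
  rcases hx with h | h
  · have := hS _ h1 h; rw [Finset.mem_range] at this; omega
  · have := h2 h; rw [Finset.mem_Ico] at this; omega

lemma extend_mono {m k : ℕ} {S S' : Finset (Finset ℕ)} (h : S ⊆ S') :
    extend m k S ⊆ extend m k S' :=
  Finset.image_subset_image (Finset.product_subset_product h (Finset.Subset.refl _))

lemma wpoly_extend (m k : ℕ) (S : Finset (Finset ℕ)) (hS : ∀ T ∈ S, T ⊆ range m) :
    wpoly (m + k) (extend m k S) = wpoly m S := by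
  classical
  rw [wpoly, extend, Finset.sum_image]
  · rw [Finset.sum_product]
    have key : ∀ T ∈ S, ∑ U ∈ (Finset.Ico m (m+k)).powerset,
        (X : Polynomial ℤ) ^ (T ∪ U).card * (1 - X) ^ (m + k - (T ∪ U).card)
        = X ^ T.card * (1 - X) ^ (m - T.card) := by
      intro T hT
      have hTm : T.card ≤ m := by
        have := Finset.card_le_card (hS T hT); simpa using this
      have : ∀ U ∈ (Finset.Ico m (m+k)).powerset,
          (X : Polynomial ℤ) ^ (T ∪ U).card * (1 - X) ^ (m + k - (T ∪ U).card)
          = (X ^ T.card * (1 - X) ^ (m - T.card)) * (X ^ U.card * (1 - X) ^ ((Finset.Ico m (m+k)).card - U.card)) := by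
        intro U hU
        rw [Finset.mem_powerset] at hU
        have hdisj : Disjoint T U := by
          rw [Finset.disjoint_left]
          intro x hx1 hx2
          have h1 := hS T hT hx1
          have h2 := hU hx2
          rw [Finset.mem_range] at h1
          rw [Finset.mem_Ico] at h2
          omega
        have hUk : U.card ≤ k := by
          have := Finset.card_le_card hU
          rwa [Nat.card_Ico, Nat.add_sub_cancel_left] at this
        rw [Finset.card_union_of_disjoint hdisj, Nat.card_Ico, Nat.add_sub_cancel_left]
        have h3 : m + k - (T.card + U.card) = (m - T.card) + (k - U.card) := by omega
        rw [h3, pow_add, pow_add]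
        ring
      rw [Finset.sum_congr rfl this, ← Finset.mul_sum, sum_powerset_one, mul_one]
    rw [Finset.sum_congr rfl key, wpoly]
  · intro p hp q hq hpq
    simp only [Finset.mem_coe, Finset.mem_product, Finset.mem_powerset] at hp hq
    have key : ∀ (p q : Finset ℕ × Finset ℕ), p.1 ∈ S → p.2 ⊆ Finset.Ico m (m+k) →
        q.1 ∈ S → q.2 ⊆ Finset.Ico m (m+k) → p.1 ∪ p.2 = q.1 ∪ q.2 → p.1 ⊆ q.1 ∧ p.2 ⊆ q.2 := by
      rintro ⟨T, U⟩ ⟨T', U'⟩ h1 h2 h3 h4 heq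
      constructor
      · intro x hx
        have hxr : x < m := by have := hS _ h1 hx; simpa using this
        have : x ∈ T' ∪ U' := by rw [← heq]; exact Finset.mem_union_left _ hx
        rcases Finset.mem_union.1 this with h | h
        · exact h
        · have := h4 h; rw [Finset.mem_Ico] at this; omega
      · intro x hx
        have hxr := h2 hx
        rw [Finset.mem_Ico] at hxr
        have : x ∈ T' ∪ U' := by rw [← heq]; exact Finset.mem_union_right _ hx
        rcases Finset.mem_union.1 this with h | h
        · have := hS _ h3 h; rw [Finset.mem_range] at this; omega
        · exact h
    have h1 := key p q hp.1 hp.2 hq.1 hq.2 hpq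
    have h2 := key q p hq.1 hq.2 hp.1 hp.2 hpq.symm
    exact Prod.ext (Finset.Subset.antisymm h1.1 h2.1) (Finset.Subset.antisymm h1.2 h2.2)

/-- canonical word family with prescribed counts -/
lemma exists_canonical (n : ℕ) (α β : ℕ → ℕ) (hαβ : ∀ i ≤ n, β i ≤ α i)
    (hα : ∀ i ≤ n, α i ≤ n.choose i) :
    ∃ W V : Finset (Finset ℕ), V ⊆ W ∧ (∀ T ∈ W, T ⊆ range n) ∧
      (∀ i ≤ n, cnt W i = α i) ∧ (∀ i ≤ n, cnt V i = β i) := by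
  classical
  have hch : ∀ i : ℕ, ∃ w : Finset (Finset ℕ), w ⊆ (range n).powersetCard i ∧
      w.card = min (α i) (n.choose i) := by
    intro i
    apply Finset.exists_subset_card_eq
    rw [Finset.card_powersetCard, Finset.card_range]
    exact min_le_right _ _
  choose w hw1 hw2 using hch
  have hch2 : ∀ i : ℕ, ∃ v : Finset (Finset ℕ), v ⊆ w i ∧ v.card = min (β i) ((w i).card) := by
    intro i
    exact Finset.exists_subset_card_eq (min_le_right _ _)
  choose v hv1 hv2 using hch2
  refine ⟨(range (n+1)).biUnion w, (range (n+1)).biUnion v, ?_, ?_, ?_, ?_⟩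
  · apply Finset.biUnion_subset.2
    intro i hi
    exact Finset.Subset.trans (hv1 i) (Finset.subset_biUnion_of_mem w hi)
  · intro T hT
    rw [Finset.mem_biUnion] at hT
    obtain ⟨i, _, hTi⟩ := hT
    exact (Finset.mem_powersetCard.1 (hw1 i hTi)).1
  · intro i hi
    have hfil : ((range (n+1)).biUnion w).filter (fun T => T.card = i) = w i := by
      apply Finset.Subset.antisymm
      · intro T hT
        rw [Finset.mem_filter, Finset.mem_biUnion] at hT
        obtain ⟨⟨j, _, hTj⟩, hc⟩ := hT
        have := (Finset.mem_powersetCard.1 (hw1 j hTj)).2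
        rwa [show j = i by omega] at hTj
      · intro T hT
        rw [Finset.mem_filter, Finset.mem_biUnion]
        exact ⟨⟨i, Finset.mem_range.2 (by omega), hT⟩,
          (Finset.mem_powersetCard.1 (hw1 i hT)).2⟩
    rw [cnt, hfil, hw2, min_eq_left (hα i hi)]
  · intro i hi
    have hfil : ((range (n+1)).biUnion v).filter (fun T => T.card = i) = v i := by
      apply Finset.Subset.antisymm
      · intro T hT
        rw [Finset.mem_filter, Finset.mem_biUnion] at hT
        obtain ⟨⟨j, _, hTj⟩, hc⟩ := hT
        have := (Finset.mem_powersetCard.1 (hw1 j (hv1 j hTj))).2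
        rwa [show j = i by omega] at hTj
      · intro T hT
        rw [Finset.mem_filter, Finset.mem_biUnion]
        exact ⟨⟨i, Finset.mem_range.2 (by omega), hT⟩,
          (Finset.mem_powersetCard.1 (hw1 i (hv1 i hT))).2⟩
    have hβ : β i ≤ (w i).card := by
      rw [hw2, min_eq_left (hα i hi)]
      exact hαβ i hi
    rw [cnt, hfil, hv2, min_eq_left hβ]


/-- generalized cylinder: coordinates in `s` prescribed, true exactly on `T` -/
def gcyl (s T : Finset ℕ) : Set (ℕ → Bool) :=
  {x | ∀ i ∈ s, x i = decide (i ∈ T)}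

lemma gcyl_measurable (s T : Finset ℕ) : MeasurableSet (gcyl s T) := by
  have : gcyl s T = ⋂ i ∈ s, {x : ℕ → Bool | x i = decide (i ∈ T)} := by
    ext x; simp [gcyl]
  rw [this]
  apply MeasurableSet.biInter (Set.to_countable _)
  intro i _
  exact measurable_pi_apply i (MeasurableSet.singleton _)

lemma isClopen_gcyl (s T : Finset ℕ) : IsClopen (gcyl s T) := by
  have : gcyl s T = ⋂ i ∈ s, {x : ℕ → Bool | x i = decide (i ∈ T)} := by
    ext x; simp [gcyl]
  rw [this]
  apply Set.Finite.isClopen_biInter (Finset.finite_toSet s)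
  intro i _
  exact (isClopen_discrete ({decide (i ∈ T)} : Set Bool)).preimage (continuous_apply i)

lemma isBernoulli_gcyl {r : ℝ} {μ : Measure (ℕ → Bool)} (hμ : IsBernoulli r μ)
    {s T : Finset ℕ} (hT : T ⊆ s) :
    μ (gcyl s T) = ENNReal.ofReal (r ^ T.card * (1 - r) ^ (s.card - T.card)) := by
  have h := hμ s (fun i => decide (i ∈ T))
  have h1 : (s.filter fun i => decide (i ∈ T) = true) = T := by
    apply Finset.Subset.antisymm
    · intro i hi
      rw [Finset.mem_filter] at hi
      simpa using hi.2
    · intro i hi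
      rw [Finset.mem_filter]
      exact ⟨hT hi, by simpa using hi⟩
  have h2 : (s.filter fun i => decide (i ∈ T) = false) = s \ T := by
    ext i
    rw [Finset.mem_filter, Finset.mem_sdiff]
    simp
  rw [h1, h2, Finset.card_sdiff_of_subset hT] at h
  exact h

lemma gcyl_disjoint {m : ℕ} {T T' : Finset ℕ} (hT : T ⊆ range m) (hT' : T' ⊆ range m)
    (hne : T ≠ T') : Disjoint (gcyl (range m) T) (gcyl (range m) T') := by
  rw [Set.disjoint_left]
  intro x hx hx'
  apply hne
  ext i
  by_cases him : i ∈ range m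
  · have h1 := hx i him
    have h2 := hx' i him
    rw [h1] at h2
    constructor <;> intro h
    · simpa using (by rw [← h2]; simpa using h : decide (i ∈ T') = true)
    · have : decide (i ∈ T') = true := by simpa using h
      rw [← h2] at this
      simpa using this
  · constructor <;> intro h
    · exact absurd (hT h) him
    · exact absurd (hT' h) him

lemma gcyl_mem_self (m : ℕ) (T : Finset ℕ) : (fun i => decide (i ∈ T)) ∈ gcyl (range m) T :=
  fun i _ => rfl

lemma eq_of_mem_gcyl {m : ℕ} {T T' : Finset ℕ} (hT : T ⊆ range m) (hT' : T' ⊆ range m)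
    {x : ℕ → Bool} (hx : x ∈ gcyl (range m) T) (hx' : x ∈ gcyl (range m) T') : T = T' := by
  by_contra hne
  exact (Set.disjoint_left.1 (gcyl_disjoint hT hT' hne)) hx hx'

/-- the clopen set determined by a word family -/
def ESet (m : ℕ) (S : Finset (Finset ℕ)) : Set (ℕ → Bool) :=
  ⋃ T ∈ S, gcyl (range m) T

lemma isClopen_ESet (m : ℕ) (S : Finset (Finset ℕ)) : IsClopen (ESet m S) := by
  apply Set.Finite.isClopen_biUnion (Finset.finite_toSet S)
  intro T _
  exact isClopen_gcyl _ _

lemma ESet_mono {m : ℕ} {S S' : Finset (Finset ℕ)} (h : S ⊆ S') : ESet m S ⊆ ESet m S' :=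
  Set.biUnion_subset_biUnion_left h

lemma aeval_wpoly (m : ℕ) (S : Finset (Finset ℕ)) (r : ℝ) :
    (aeval r (wpoly m S) : ℝ) = ∑ T ∈ S, r ^ T.card * (1 - r) ^ (m - T.card) := by
  rw [wpoly, map_sum]
  apply Finset.sum_congr rfl
  intro T _
  simp

/-- main measure computation -/
lemma measure_ESet {r : ℝ} {μ : Measure (ℕ → Bool)} (hμ : IsBernoulli r μ)
    (hr : r ∈ Set.Icc (0:ℝ) 1) (m : ℕ) (S : Finset (Finset ℕ))
    (hS : ∀ T ∈ S, T ⊆ range m) :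
    μ (ESet m S) = ENNReal.ofReal (aeval r (wpoly m S)) := by
  rw [ESet, measure_biUnion_finset]
  · rw [aeval_wpoly]
    have : ∀ T ∈ S, μ (gcyl (range m) T)
        = ENNReal.ofReal (r ^ T.card * (1 - r) ^ (m - T.card)) := by
      intro T hT
      rw [isBernoulli_gcyl hμ (hS T hT), Finset.card_range]
    rw [Finset.sum_congr rfl this, ← ENNReal.ofReal_sum_of_nonneg]
    intro T _
    have h1 : (0:ℝ) ≤ r ^ T.card := pow_nonneg hr.1 _
    have h2 : (0:ℝ) ≤ (1 - r) ^ (m - T.card) := pow_nonneg (by linarith [hr.2]) _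
    positivity
  · intro T hT T' hT' hne
    exact gcyl_disjoint (hS T hT) (hS T' hT') hne
  · intro T _
    exact gcyl_measurable _ _


lemma ESet_extend (m k : ℕ) (S : Finset (Finset ℕ)) (hS : ∀ T ∈ S, T ⊆ range m) :
    ESet (m + k) (extend m k S) = ESet m S := by
  classical
  ext x
  simp only [ESet, Set.mem_iUnion, exists_prop]
  constructor
  · rintro ⟨T', hT', hx⟩
    rw [extend, Finset.mem_image] at hT'
    obtain ⟨⟨T, U⟩, hp, rfl⟩ := hT'
    rw [Finset.mem_product, Finset.mem_powerset] at hp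
    refine ⟨T, hp.1, ?_⟩
    intro i hi
    rw [Finset.mem_range] at hi
    have := hx i (Finset.mem_range.2 (by omega))
    rw [this]
    have hiU : i ∉ U := fun h => by
      have := hp.2 h; rw [Finset.mem_Ico] at this; omega
    simp only [Finset.mem_union, decide_eq_decide]
    tauto
  · rintro ⟨T, hT, hx⟩
    refine ⟨T ∪ (Finset.Ico m (m+k)).filter (fun i => x i = true), ?_, ?_⟩
    · rw [extend, Finset.mem_image]
      exact ⟨(T, (Finset.Ico m (m+k)).filter (fun i => x i = true)),
        Finset.mem_product.2 ⟨hT, Finset.mem_powerset.2 (Finset.filter_subset _ _)⟩, rfl⟩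
    · intro i hi
      rw [Finset.mem_range] at hi
      by_cases him : i < m
      · have := hx i (Finset.mem_range.2 him)
        rw [this]
        have hiIco : i ∉ Finset.Ico m (m+k) := by rw [Finset.mem_Ico]; omega
        simp only [Finset.mem_union, Finset.mem_filter, decide_eq_decide]
        tauto
      · have hiT : i ∉ T := fun h => by
          have := hS T hT h; rw [Finset.mem_range] at this; omega
        have hiIco : i ∈ Finset.Ico m (m+k) := by rw [Finset.mem_Ico]; omega
        cases hxi : x i with
        | true => simp [Finset.mem_union, hiT, hiIco, hxi]
        | false => simp [Finset.mem_union, hiT, hiIco, hxi]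

/-- Structure of clopen sets in the Cantor space. -/
lemma isClopen_structure {A : Set (ℕ → Bool)} (hA : IsClopen A) :
    ∃ (m : ℕ) (S : Finset (Finset ℕ)), (∀ T ∈ S, T ⊆ range m) ∧ A = ESet m S := by
  classical
  -- every point of A has a basic neighborhood inside A
  have key : ∀ x ∈ A, ∃ n : ℕ, {y : ℕ → Bool | ∀ i < n, y i = x i} ⊆ A := by
    intro x hx
    obtain ⟨I, u, hu, hsub⟩ := isOpen_pi_iff.1 hA.2 x hx
    rcases I.bddAbove with ⟨n, hn⟩
    refine ⟨n + 1, ?_⟩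
    intro y hy
    apply hsub
    intro i hi
    have hiI : i ∈ I := hi
    have : y i = x i := hy i (by have := hn hiI; omega)
    rw [this]
    exact (hu i hiI).2
  choose! nfun hnfun using key
  -- cover A by the basic neighborhoods, extract finite subcover
  have hAcomp : IsCompact A := hA.1.isCompact
  have hcover : A ⊆ ⋃ x ∈ A, {y : ℕ → Bool | ∀ i < nfun x, y i = x i} := by
    intro x hx
    exact Set.mem_biUnion hx (fun i _ => rfl)
  have hopen : ∀ x ∈ A, IsOpen {y : ℕ → Bool | ∀ i < nfun x, y i = x i} := by
    intro x _
    have : {y : ℕ → Bool | ∀ i < nfun x, y i = x i}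
        = ⋂ i ∈ Finset.range (nfun x), {y : ℕ → Bool | y i = x i} := by
      ext y; simp
    rw [this]
    apply Set.Finite.isOpen_biInter (Finset.finite_toSet _)
    intro i _
    exact (isClopen_discrete ({x i} : Set Bool)).preimage (continuous_apply i) |>.2
  obtain ⟨t, htA, htfin, htcov⟩ := hAcomp.elim_finite_subcover_image hopen hcover
  -- m = max of the levels
  have : ∃ m : ℕ, ∀ x ∈ t, nfun x ≤ m := by
    rcases (htfin.image nfun).bddAbove with ⟨m, hm⟩
    exact ⟨m, fun x hx => hm (Set.mem_image_of_mem _ hx)⟩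
  obtain ⟨m, hm⟩ := this
  -- membership in A depends only on coordinates < m
  have hdet : ∀ x ∈ A, ∀ y : ℕ → Bool, (∀ i < m, y i = x i) → y ∈ A := by
    intro x hx y hy
    obtain ⟨z, hz, hxz⟩ := Set.mem_iUnion₂.1 (htcov hx)
    have hzt := hz
    apply hnfun z (htA hzt)
    intro i hi
    rw [hy i (by have := hm z hzt; omega)]
    exact hxz i hi
  refine ⟨m, ((range m).powerset).filter (fun T => (fun i => decide (i ∈ T)) ∈ A), ?_, ?_⟩
  · intro T hT
    exact Finset.mem_powerset.1 (Finset.mem_filter.1 hT).1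
  · ext x
    simp only [ESet, Set.mem_iUnion, exists_prop, Finset.mem_filter, Finset.mem_powerset]
    constructor
    · intro hx
      refine ⟨(range m).filter (fun i => x i = true), ⟨Finset.filter_subset _ _, ?_⟩, ?_⟩
      · apply hdet x hx
        intro i hi
        simp only [Finset.mem_filter, Finset.mem_range]
        cases hxi : x i with
        | true => simp [hi, hxi]
        | false => simp [hi, hxi]
      · intro i hi
        rw [Finset.mem_range] at hi
        simp only [Finset.mem_filter, Finset.mem_range]
        cases hxi : x i with
        | true => simp [hi, hxi]
        | false => simp [hi, hxi]
    · rintro ⟨T, ⟨hTm, hTA⟩, hx⟩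
      apply hdet _ hTA
      intro i hi
      exact hx i (Finset.mem_range.2 hi)


abbrev G := ℕ → ZMod 2

noncomputable def haarG : Measure G :=
  Measure.addHaarMeasure (⊤ : TopologicalSpace.PositiveCompacts G)

lemma haarG_univ : haarG Set.univ = 1 := by
  have := Measure.addHaarMeasure_self (K₀ := (⊤ : TopologicalSpace.PositiveCompacts G))
  simpa [haarG] using this

instance : haarG.IsAddLeftInvariant := by
  unfold haarG; infer_instance

def Zc (s : Finset ℕ) (f : ℕ → ZMod 2) : Set G := {g | ∀ i ∈ s, g i = f i}

lemma Zc_measurable (s : Finset ℕ) (f : ℕ → ZMod 2) : MeasurableSet (Zc s f) := by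
  have : Zc s f = ⋂ i ∈ s, {g : G | g i = f i} := by ext g; simp [Zc]
  rw [this]
  apply MeasurableSet.biInter (Set.to_countable _)
  intro i _
  exact measurable_pi_apply i (MeasurableSet.singleton _)

lemma haarG_Zc (s : Finset ℕ) (f : ℕ → ZMod 2) :
    haarG (Zc s f) = (2 ^ s.card : ℝ≥0∞)⁻¹ := by
  classical
  have inv : ∀ f' : ℕ → ZMod 2, haarG (Zc s f') = haarG (Zc s f) := by
    intro f'
    have hset : Zc s f' = (fun g => (f - f') + g) ⁻¹' (Zc s f) := by
      ext g
      simp only [Set.mem_preimage, Zc, Set.mem_setOf_eq, Pi.add_apply, Pi.sub_apply]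
      constructor
      · intro h i hi
        rw [h i hi, sub_add_cancel]
      · intro h i hi
        have h2 := h i hi
        have : g i = f i - (f i - f' i) := by
          rw [eq_sub_iff_add_eq, add_comm]
          exact h2
        rwa [sub_sub_cancel] at this
    rw [hset, measure_preimage_add]
  -- partition of univ
  have hpart : (Set.univ : Set G) = ⋃ T ∈ s.powerset, Zc s (fun i => if i ∈ T then 1 else 0) := by
    ext g
    simp only [Set.mem_univ, true_iff, Set.mem_iUnion, exists_prop]
    refine ⟨s.filter (fun i => g i = 1), Finset.mem_powerset.2 (Finset.filter_subset _ _), ?_⟩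
    intro i hi
    by_cases h1 : g i = 1
    · simp [Finset.mem_filter, hi, h1]
    · have h0 : g i = 0 := by
        have : ∀ z : ZMod 2, z = 0 ∨ z = 1 := by decide
        rcases this (g i) with h | h
        · exact h
        · exact absurd h h1
      simp [Finset.mem_filter, hi, h1, h0]
  have hsum : ∑ T ∈ s.powerset, haarG (Zc s (fun i => if i ∈ T then 1 else 0)) = 1 := by
    rw [← measure_biUnion_finset, ← hpart, haarG_univ]
    · intro T hT T' hT' hne
      rw [Finset.mem_coe, Finset.mem_powerset] at hT hT'
      rw [Function.onFun, Set.disjoint_left]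
      intro g hg hg'
      apply hne
      ext i
      constructor <;> intro h
      · by_contra hiT'
        have e1 := hg i (hT h)
        have e2 := hg' i (hT h)
        simp only [if_pos h] at e1
        simp only [if_neg hiT'] at e2
        rw [e1] at e2
        exact absurd e2 (by decide)
      · by_contra hiT
        have e1 := hg i (hT' h)
        have e2 := hg' i (hT' h)
        simp only [if_neg hiT] at e1
        simp only [if_pos h] at e2
        rw [e1] at e2
        exact absurd e2.symm (by decide)
    · intro T _
      exact Zc_measurable _ _
  have hconst : ∀ T ∈ s.powerset,
      haarG (Zc s (fun i => if i ∈ T then 1 else 0)) = haarG (Zc s f) := fun T _ => inv _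
  rw [Finset.sum_congr rfl hconst, Finset.sum_const, Finset.card_powerset, nsmul_eq_mul] at hsum
  have h2 : ((2 ^ s.card : ℕ) : ℝ≥0∞) * haarG (Zc s f) = 1 := by
    exact_mod_cast hsum
  have hne : ((2:ℝ≥0∞) ^ s.card) ≠ 0 := by positivity
  have hnetop : ((2:ℝ≥0∞) ^ s.card) ≠ ⊤ := by
    exact ENNReal.pow_ne_top (by norm_num)
  rw [show ((2 ^ s.card : ℕ) : ℝ≥0∞) = (2:ℝ≥0∞) ^ s.card by push_cast; ring] at h2
  calc haarG (Zc s f)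
      = ((2:ℝ≥0∞) ^ s.card)⁻¹ * ((2:ℝ≥0∞) ^ s.card * haarG (Zc s f)) := by
        rw [← mul_assoc, ENNReal.inv_mul_cancel hne hnetop, one_mul]
    _ = ((2:ℝ≥0∞) ^ s.card)⁻¹ := by rw [h2, mul_one]


lemma cylB_measurable (s : Finset ℕ) (e : ℕ → Bool) :
    MeasurableSet {x : ℕ → Bool | ∀ i ∈ s, x i = e i} := by
  have : {x : ℕ → Bool | ∀ i ∈ s, x i = e i} = ⋂ i ∈ s, {x : ℕ → Bool | x i = e i} := by
    ext x; simp
  rw [this]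
  apply MeasurableSet.biInter (Set.to_countable _)
  intro i _
  exact measurable_pi_apply i (MeasurableSet.singleton _)

def toBoolSeq (g : G) (n : ℕ) : Bool := decide (g n = 1)

lemma toBoolSeq_measurable : Measurable toBoolSeq := by
  apply measurable_pi_lambda
  intro n
  exact (measurable_of_countable (fun z : ZMod 2 => decide (z = 1))).comp (measurable_pi_apply n)

noncomputable def nuHalf : Measure (ℕ → Bool) := haarG.map toBoolSeq

lemma isBernoulli_nuHalf : IsBernoulli (1/2) nuHalf := by
  intro s e
  rw [nuHalf, Measure.map_apply toBoolSeq_measurable (cylB_measurable s e)]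
  have hpre : toBoolSeq ⁻¹' {x | ∀ i ∈ s, x i = e i}
      = Zc s (fun i => if e i then 1 else 0) := by
    ext g
    simp only [Set.mem_preimage, Set.mem_setOf_eq, Zc, toBoolSeq]
    apply forall₂_congr
    intro i _
    have hz : ∀ (b : Bool) (z : ZMod 2), (decide (z = 1) = b ↔ z = if b then 1 else 0) := by
      decide
    exact hz (e i) (g i)
  rw [hpre, haarG_Zc]
  have hcards : (s.filter fun i => e i = true).card + (s.filter fun i => e i = false).card
      = s.card := by
    have h : (s.filter fun i => e i = false) = s.filter (fun i => ¬ (e i = true)) := by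
      apply Finset.filter_congr
      intro i _
      simp
    rw [h, Finset.card_filter_add_card_filter_not]
  rw [show (1:ℝ)/2 = 2⁻¹ by norm_num, show (1:ℝ) - 2⁻¹ = 2⁻¹ by norm_num, ← pow_add, hcards]
  rw [show ((2:ℝ)⁻¹) ^ s.card = ((2:ℝ) ^ s.card)⁻¹ by rw [inv_pow]]
  rw [ENNReal.ofReal_inv_of_pos (by positivity), ENNReal.ofReal_pow (by norm_num)]
  norm_num


-- block structure
def blk (t n : ℕ) : Finset ℕ := Finset.Ico (t*n) (t*n+t)

def shiftU (t n : ℕ) (U : Finset ℕ) : Finset ℕ := U.image (fun j => t*n + j)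

def DSet (t n : ℕ) (Ks : Finset (Finset ℕ)) : Set (ℕ → Bool) :=
  ⋃ U ∈ Ks, gcyl (blk t n) (shiftU t n U)

lemma DSet_measurable (t n : ℕ) (Ks : Finset (Finset ℕ)) : MeasurableSet (DSet t n Ks) :=
  MeasurableSet.biUnion (Set.to_countable _) (fun U _ => gcyl_measurable _ _)

lemma shiftU_subset_blk {t n : ℕ} {U : Finset ℕ} (hU : U ⊆ range t) :
    shiftU t n U ⊆ blk t n := by
  intro i hi
  rw [shiftU, Finset.mem_image] at hi
  obtain ⟨j, hj, rfl⟩ := hi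
  have := Finset.mem_range.1 (hU hj)
  rw [blk, Finset.mem_Ico]
  omega

lemma mem_shiftU {t n j : ℕ} {U : Finset ℕ} (hj : j < t) :
    t*n + j ∈ shiftU t n U ↔ j ∈ U := by
  rw [shiftU, Finset.mem_image]
  constructor
  · rintro ⟨j', hj', he⟩
    have : j' = j := by omega
    rwa [← this]
  · intro h; exact ⟨j, h, rfl⟩

lemma blk_disjoint {t a n : ℕ} (ht : 1 ≤ t) (hne : a ≠ n) : Disjoint (blk t a) (blk t n) := by
  rw [Finset.disjoint_left]
  intro i hi hi'
  rw [blk, Finset.mem_Ico] at hi hi'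
  rcases Nat.lt_or_ge a n with h | h
  · have : t*a + t ≤ t*n := by calc t*a + t = t*(a+1) := by ring
                                  _ ≤ t*n := Nat.mul_le_mul_left t h
    omega
  · have h2 : n < a := by omega
    have : t*n + t ≤ t*a := by calc t*n + t = t*(n+1) := by ring
                                  _ ≤ t*a := Nat.mul_le_mul_left t h2
    omega

/-- main induction: measure of a cylinder intersected with block constraints -/
lemma measure_inter_blocks {ν : Measure (ℕ → Bool)} (hν : IsBernoulli (1/2) ν)
    (t : ℕ) (ht : 1 ≤ t) (Ks : ℕ → Finset (Finset ℕ))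
    (hKs : ∀ n, ∀ U ∈ Ks n, U ⊆ range t) (s : Finset ℕ) :
    ∀ C T : Finset ℕ, T ⊆ C → (∀ n ∈ s, Disjoint C (blk t n)) →
    ν (gcyl C T ∩ ⋂ n ∈ s, DSet t n (Ks n)) =
      ENNReal.ofReal ((2⁻¹:ℝ) ^ C.card * ∏ n ∈ s, ((Ks n).card : ℝ) / 2^t) := by
  classical
  induction s using Finset.induction_on with
  | empty =>
    intro C T hTC _
    simp only [Finset.notMem_empty, Set.iInter_of_empty, Set.iInter_univ, Set.inter_univ,
      Finset.prod_empty, mul_one]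
    rw [isBernoulli_gcyl hν hTC]
    congr 1
    rw [show (1:ℝ)/2 = 2⁻¹ by norm_num, show (1:ℝ) - 2⁻¹ = 2⁻¹ by norm_num, ← pow_add]
    congr 1
    have := Finset.card_le_card hTC
    omega
  | @insert a s ha ih =>
    intro C T hTC hdisj
    have hCa : Disjoint C (blk t a) := hdisj a (Finset.mem_insert_self a s)
    -- rewrite the intersection
    have hset : gcyl C T ∩ ⋂ n ∈ insert a s, DSet t n (Ks n)
        = ⋃ U ∈ Ks a, (gcyl (C ∪ blk t a) (T ∪ shiftU t a U) ∩ ⋂ n ∈ s, DSet t n (Ks n)) := by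
      rw [Finset.set_biInter_insert]
      ext y
      simp only [Set.mem_inter_iff, Set.mem_iUnion, exists_prop]
      constructor
      · rintro ⟨hy1, hy2, hy3⟩
        rw [DSet] at hy2
        obtain ⟨U, hU, hyU⟩ := Set.mem_iUnion₂.1 hy2
        refine ⟨U, hU, ⟨?_, hy3⟩⟩
        intro i hi
        rcases Finset.mem_union.1 hi with hiC | hiB
        · rw [hy1 i hiC]
          apply decide_eq_decide.2
          have hiB' : i ∉ shiftU t a U :=
            fun h => (Finset.disjoint_left.1 hCa) hiC (shiftU_subset_blk (hKs a U hU) h)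
          simp only [Finset.mem_union]
          tauto
        · rw [hyU i hiB]
          apply decide_eq_decide.2
          have hiT : i ∉ T := fun h => (Finset.disjoint_left.1 hCa) (hTC h) hiB
          simp only [Finset.mem_union]
          tauto
      · rintro ⟨U, hU, hy1, hy3⟩
        have hTs : shiftU t a U ⊆ blk t a := shiftU_subset_blk (hKs a U hU)
        refine ⟨?_, ?_, hy3⟩
        · intro i hi
          rw [hy1 i (Finset.mem_union_left _ hi)]
          apply decide_eq_decide.2
          have hiB' : i ∉ shiftU t a U :=
            fun h => (Finset.disjoint_left.1 hCa) hi (hTs h)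
          simp only [Finset.mem_union]
          tauto
        · rw [DSet]
          apply Set.mem_biUnion hU
          intro i hi
          rw [hy1 i (Finset.mem_union_right _ hi)]
          apply decide_eq_decide.2
          have hiT : i ∉ T := fun h => (Finset.disjoint_left.1 hCa) (hTC h) hi
          simp only [Finset.mem_union]
          tauto
    rw [hset, measure_biUnion_finset]
    · have hval : ∀ U ∈ Ks a,
          ν (gcyl (C ∪ blk t a) (T ∪ shiftU t a U) ∩ ⋂ n ∈ s, DSet t n (Ks n))
          = ENNReal.ofReal ((2⁻¹:ℝ) ^ (C.card + t) * ∏ n ∈ s, ((Ks n).card : ℝ) / 2^t) := by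
        intro U hU
        have h1 : T ∪ shiftU t a U ⊆ C ∪ blk t a :=
          Finset.union_subset_union hTC (shiftU_subset_blk (hKs a U hU))
        have h2 : ∀ n ∈ s, Disjoint (C ∪ blk t a) (blk t n) := by
          intro n hn
          apply Finset.disjoint_union_left.2
          exact ⟨hdisj n (Finset.mem_insert_of_mem hn),
            blk_disjoint ht (fun h => ha (h ▸ hn))⟩
        rw [ih _ _ h1 h2]
        congr 2
        rw [Finset.card_union_of_disjoint hCa, blk, Nat.card_Ico]
        congr 1
        omega
      rw [Finset.sum_congr rfl hval, Finset.sum_const, nsmul_eq_mul, Finset.prod_insert ha]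
      rw [← ENNReal.ofReal_natCast, ← ENNReal.ofReal_mul (by positivity)]
      congr 1
      have h2t : (2:ℝ)^t ≠ 0 := by positivity
      rw [pow_add]
      field_simp
      rw [mul_assoc _ ((1/2:ℝ)^t), ← mul_pow, one_div, inv_mul_cancel₀ two_ne_zero, one_pow, mul_one]
      try ring
      try tauto
    · -- pairwise disjoint
      intro U hU U' hU' hne
      rw [Function.onFun, Set.disjoint_left]
      intro y hy hy'
      apply hne
      have key : ∀ j ∈ range t, (j ∈ U ↔ j ∈ U') := by
        intro j hj
        have hjt := Finset.mem_range.1 hj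
        have hib : t*a + j ∈ blk t a := by rw [blk, Finset.mem_Ico]; omega
        have e1 := hy.1 (t*a+j) (Finset.mem_union_right _ hib)
        have e2 := hy'.1 (t*a+j) (Finset.mem_union_right _ hib)
        rw [e1] at e2
        have hiT : t*a + j ∉ T := fun h => (Finset.disjoint_left.1 hCa) (hTC h) hib
        rw [decide_eq_decide] at e2
        simp only [Finset.mem_union, mem_shiftU hjt] at e2
        tauto
      ext j
      constructor <;> intro h
      · exact (key j (hKs a U (Finset.mem_coe.1 hU) h)).1 h
      · exact (key j (hKs a U' (Finset.mem_coe.1 hU') h)).2 h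
    · intro U _
      exact (gcyl_measurable _ _).inter
        (MeasurableSet.biInter (Set.to_countable _) (fun n _ => DSet_measurable _ _ _))


def phi (t : ℕ) (y : ℕ → Bool) (n : ℕ) : Bool := decide (∀ j ∈ range t, y (t*n + j) = true)

lemma phi_measurable (t : ℕ) : Measurable (phi t) := by
  apply measurable_pi_lambda
  intro n
  have : (fun y => phi t y n)
      = (fun v : Fin t → Bool => decide (∀ j : Fin t, v j = true)) ∘
        (fun y (j : Fin t) => y (t*n + j)) := by
    funext y
    simp only [Function.comp_apply, phi]
    apply (decide_eq_decide).2
    constructor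
    · intro h j; exact h j (Finset.mem_range.2 j.2)
    · intro h j hj; exact h ⟨j, Finset.mem_range.1 hj⟩
  rw [this]
  exact (measurable_of_countable _).comp (measurable_pi_lambda _ (fun j => measurable_pi_apply _))

/-- block pattern of y at block n -/
def bpat (t n : ℕ) (y : ℕ → Bool) : Finset ℕ := (range t).filter (fun j => y (t*n + j) = true)

lemma mem_gcyl_blk_iff {t n : ℕ} {U : Finset ℕ} (hU : U ⊆ range t) (y : ℕ → Bool) :
    y ∈ gcyl (blk t n) (shiftU t n U) ↔ bpat t n y = U := by
  constructor
  · intro h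
    ext j
    rw [bpat, Finset.mem_filter]
    constructor
    · rintro ⟨hj, hy⟩
      have hjt := Finset.mem_range.1 hj
      have := h (t*n+j) (by rw [blk, Finset.mem_Ico]; omega)
      rw [hy] at this
      have := (mem_shiftU hjt).1 (of_decide_eq_true this.symm)
      exact this
    · intro hjU
      have hjt := Finset.mem_range.1 (hU hjU)
      refine ⟨hU hjU, ?_⟩
      have := h (t*n+j) (by rw [blk, Finset.mem_Ico]; omega)
      rw [this]
      simp [mem_shiftU hjt, hjU]
  · rintro rfl
    intro i hi
    rw [blk, Finset.mem_Ico] at hi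
    obtain ⟨j, hjt, rfl⟩ : ∃ j, j < t ∧ i = t*n + j := ⟨i - t*n, by omega, by omega⟩
    have : (t*n + j ∈ shiftU t n (bpat t n y)) ↔ y (t*n+j) = true := by
      rw [mem_shiftU hjt, bpat, Finset.mem_filter]
      constructor
      · exact fun h => h.2
      · intro h; exact ⟨Finset.mem_range.2 hjt, h⟩
    cases hy : y (t*n+j) with
    | true => simp [this, hy]
    | false =>
      have : ¬ (t*n + j ∈ shiftU t n (bpat t n y)) := by rw [this, hy]; simp
      simp [this]

lemma mem_DSet_iff {t n : ℕ} {Ks : Finset (Finset ℕ)} (hKs : ∀ U ∈ Ks, U ⊆ range t)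
    (y : ℕ → Bool) : y ∈ DSet t n Ks ↔ bpat t n y ∈ Ks := by
  rw [DSet]
  constructor
  · intro h
    obtain ⟨U, hU, hyU⟩ := Set.mem_iUnion₂.1 h
    rwa [(mem_gcyl_blk_iff (hKs U hU) y).1 hyU]
  · intro h
    exact Set.mem_biUnion h ((mem_gcyl_blk_iff (hKs _ h) y).2 rfl)

def Kof (t : ℕ) : Bool → Finset (Finset ℕ)
  | true => {range t}
  | false => (range t).powerset.erase (range t)

lemma Kof_subset (t : ℕ) (b : Bool) : ∀ U ∈ Kof t b, U ⊆ range t := by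
  intro U hU
  cases b with
  | true => rw [Finset.mem_singleton.1 hU]
  | false => exact Finset.mem_powerset.1 (Finset.mem_of_mem_erase hU)

lemma Kof_card_true (t : ℕ) : ((Kof t true).card : ℝ) = 1 := by
  show ((Finset.card {range t} : ℕ) : ℝ) = 1
  simp

lemma Kof_card_false (t : ℕ) : ((Kof t false).card : ℝ) = 2^t - 1 := by
  show (((range t).powerset.erase (range t)).card : ℝ) = _
  rw [Finset.card_erase_of_mem (Finset.mem_powerset_self _), Finset.card_powerset,
    Finset.card_range]
  have : 1 ≤ 2^t := Nat.one_le_two_pow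
  push_cast [this]
  ring

lemma isBernoulli_block {ν : Measure (ℕ → Bool)} (hν : IsBernoulli (1/2) ν)
    (t : ℕ) (ht : 1 ≤ t) : IsBernoulli ((2^t : ℝ)⁻¹) (ν.map (phi t)) := by
  intro s e
  rw [Measure.map_apply (phi_measurable t) (cylB_measurable s e)]
  have hpre : phi t ⁻¹' {x | ∀ i ∈ s, x i = e i} = ⋂ n ∈ s, DSet t n (Kof t (e n)) := by
    ext y
    simp only [Set.mem_preimage, Set.mem_setOf_eq, Set.mem_iInter]
    apply forall₂_congr
    intro n _
    rw [mem_DSet_iff (Kof_subset t (e n))]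
    have hiff : bpat t n y = range t ↔ (∀ j ∈ range t, y (t*n+j) = true) :=
      Finset.filter_eq_self
    cases he : e n with
    | true =>
      show _ ↔ _ ∈ ({range t} : Finset (Finset ℕ))
      rw [Finset.mem_singleton, hiff, phi]
      constructor
      · exact fun h => of_decide_eq_true h
      · exact fun h => decide_eq_true h
    | false =>
      show _ ↔ _ ∈ (range t).powerset.erase (range t)
      rw [Finset.mem_erase, phi, decide_eq_false_iff_not]
      constructor
      · intro h
        exact ⟨fun hc => h (hiff.1 hc), Finset.mem_powerset.2 (Finset.filter_subset _ _)⟩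
      · intro h hc
        exact h.1 (hiff.2 hc)
      
  rw [hpre]
  have huniv : (⋂ n ∈ s, DSet t n (Kof t (e n)))
      = gcyl ∅ ∅ ∩ ⋂ n ∈ s, DSet t n (Kof t (e n)) := by
    have : gcyl ∅ ∅ = Set.univ := by
      ext x; simp [gcyl]
    rw [this, Set.univ_inter]
  rw [huniv, measure_inter_blocks hν t ht (fun n => Kof t (e n))
    (fun n => Kof_subset t (e n)) s ∅ ∅ (Finset.Subset.refl _)
    (fun n _ => Finset.disjoint_empty_left _)]
  congr 1
  rw [Finset.card_empty, pow_zero, one_mul]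
  rw [← Finset.prod_filter_mul_prod_filter_not s (fun n => e n = true)]
  have h2t : (2:ℝ)^t ≠ 0 := by positivity
  have hone : ∀ n ∈ s.filter (fun n => e n = true),
      ((Kof t (e n)).card : ℝ) / 2^t = (2^t : ℝ)⁻¹ := by
    intro n hn
    rw [(Finset.mem_filter.1 hn).2, Kof_card_true]
    field_simp
  have htwo : ∀ n ∈ s.filter (fun n => ¬ (e n = true)),
      ((Kof t (e n)).card : ℝ) / 2^t = 1 - (2^t : ℝ)⁻¹ := by
    intro n hn
    have : e n = false := by
      have := (Finset.mem_filter.1 hn).2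
      cases h : e n
      · rfl
      · exact absurd h this
    rw [this, Kof_card_false]
    field_simp
  have hfe : s.filter (fun n => ¬ (e n = true)) = s.filter (fun i => e i = false) := by
    apply Finset.filter_congr
    intro i _
    simp
  rw [Finset.prod_congr rfl hone, Finset.prod_congr rfl htwo, Finset.prod_const,
    Finset.prod_const, hfe]




/-! ### glue: measures exist for infinitely many parameters -/

lemma exists_bernoulli_two_pow (t : ℕ) :
    ∃ μ : Measure (ℕ → Bool), IsBernoulli ((2 ^ (t+1) : ℝ)⁻¹) μ :=
  ⟨nuHalf.map (phi (t+1)), isBernoulli_block isBernoulli_nuHalf (t+1) (by omega)⟩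

def goodR : Set ℝ := {r | r ∈ Set.Icc (0:ℝ) 1 ∧ ∃ μ : Measure (ℕ → Bool), IsBernoulli r μ}

lemma goodR_infinite : goodR.Infinite := by
  apply Set.infinite_of_injective_forall_mem
    (f := fun t : ℕ => ((2:ℝ) ^ (t+1))⁻¹)
  case hi =>
    intro x y hxy
    simp only at hxy
    field_simp at hxy
    have := Nat.pow_right_injective le_rfl (by exact_mod_cast hxy : 2^(y+1) = 2^(x+1))
    omega
  case hf =>
    intro t
    refine ⟨⟨?_, ?_⟩, exists_bernoulli_two_pow t⟩
    · positivity
    · rw [inv_le_one_iff₀]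
      right
      exact one_le_pow₀ (by norm_num)

/-! ### glue: from `Represents` to polynomial identity -/

lemma poly_transfer (p q : Polynomial ℤ)
    (h : ∀ r ∈ goodR, (aeval r p : ℝ) = aeval r q) : p = q := by
  have hmap : p.map (Int.castRingHom ℝ) = q.map (Int.castRingHom ℝ) := by
    apply Polynomial.eq_of_infinite_eval_eq
    apply Set.Infinite.mono _ goodR_infinite
    intro r hr
    have := h r hr
    simp only [Set.mem_setOf_eq, Polynomial.eval_map]
    rwa [Polynomial.aeval_def, Polynomial.aeval_def] at this
  exact Polynomial.map_injective _ Int.cast_injective hmap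

lemma aeval_wpoly_nonneg (m : ℕ) (S : Finset (Finset ℕ)) {r : ℝ}
    (hr : r ∈ Set.Icc (0:ℝ) 1) : 0 ≤ (aeval r (wpoly m S) : ℝ) := by
  rw [aeval_wpoly]
  apply Finset.sum_nonneg
  intro T _
  have h1 : (0:ℝ) ≤ r ^ T.card := pow_nonneg hr.1 _
  have h2 : (0:ℝ) ≤ (1 - r) ^ (m - T.card) := pow_nonneg (by linarith [hr.2]) _
  positivity

lemma aeval_partition_nonneg {P : Polynomial ℤ} (hP : IsPartitionPolynomial P) {r : ℝ}
    (hr : r ∈ Set.Icc (0:ℝ) 1) : 0 ≤ (aeval r P : ℝ) := by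
  obtain ⟨n, a, ha, rfl⟩ := hP
  rw [map_sum]
  apply Finset.sum_nonneg
  intro i hi
  rw [Finset.mem_range] at hi
  have h0 : (0:ℝ) ≤ (a i : ℝ) := by
    have := (ha i (by omega)).1
    exact_mod_cast this
  have h1 : (0:ℝ) ≤ r ^ i := pow_nonneg hr.1 _
  have h2 : (0:ℝ) ≤ (1 - r) ^ (n - i) := pow_nonneg (by linarith [hr.2]) _
  simp only [map_mul, map_pow, aeval_C, aeval_X, map_sub, map_one]
  have : algebraMap ℤ ℝ (a i) = (a i : ℝ) := by simp
  rw [this]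
  positivity

lemma represents_of_wpoly_eq {m : ℕ} {S : Finset (Finset ℕ)} {P : Polynomial ℤ}
    (hS : ∀ T ∈ S, T ⊆ range m) (h : wpoly m S = P) : Represents P (ESet m S) := by
  intro r hr μ hμ
  rw [measure_ESet hμ hr m S hS, h]

lemma wpoly_eq_of_represents {m : ℕ} {S : Finset (Finset ℕ)} {P : Polynomial ℤ}
    (hS : ∀ T ∈ S, T ⊆ range m) (hP : IsPartitionPolynomial P)
    (h : Represents P (ESet m S)) : wpoly m S = P := by
  apply poly_transfer
  rintro r ⟨hrI, μ, hμ⟩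
  have h1 := h r hrI μ hμ
  rw [measure_ESet hμ hrI m S hS] at h1
  exact (ENNReal.ofReal_eq_ofReal_iff (aeval_wpoly_nonneg m S hrI)
    (aeval_partition_nonneg hP hrI)).1 h1

/-- partition form with nonneg coefficients equals `bern` of the toNat coefficients -/
lemma partition_eq_bern {n : ℕ} {a : ℕ → ℤ} (h : ∀ i ≤ n, 0 ≤ a i) :
    (∑ i ∈ range (n+1), C (a i) * X ^ i * (1 - X) ^ (n - i))
      = bern n (fun i => ((a i).toNat : ℤ)) := by
  rw [bern]
  apply Finset.sum_congr rfl
  intro i hi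
  rw [Finset.mem_range] at hi
  rw [Int.toNat_of_nonneg (h i (by omega))]

lemma bern_congr_le {m : ℕ} {c d : ℕ → ℤ} (h : ∀ i ≤ m, c i = d i) :
    bern m c = bern m d := by
  rw [bern, bern]
  apply Finset.sum_congr rfl
  intro i hi
  rw [Finset.mem_range] at hi
  rw [h i (by omega)]

lemma bern_inj {m : ℕ} {c d : ℕ → ℤ} (h : bern m c = bern m d) : ∀ i ≤ m, c i = d i := by
  have hsub : bern m (fun i => c i - d i) = 0 := by
    rw [bern]
    have : ∀ i ∈ range (m+1), C (c i - d i) * X ^ i * (1 - X) ^ (m - i)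
        = C (c i) * X ^ i * (1 - X) ^ (m - i) - C (d i) * X ^ i * (1 - X) ^ (m - i) := by
      intro i _
      rw [map_sub]
      ring
    rw [Finset.sum_congr rfl this, Finset.sum_sub_distrib, ← bern, ← bern, h, sub_self]
  intro i hi
  have := bern_eq_zero m _ hsub i hi
  omega

/-- choose a sub-family with prescribed counts -/
lemma exists_sub_family (m : ℕ) (S : Finset (Finset ℕ)) (d : ℕ → ℕ)
    (hd : ∀ i ≤ m, d i ≤ cnt S i) :
    ∃ S₀ : Finset (Finset ℕ), S₀ ⊆ S ∧ (∀ i ≤ m, cnt S₀ i = d i) := by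
  classical
  have hch : ∀ i : ℕ, ∃ w : Finset (Finset ℕ), w ⊆ S.filter (fun T => T.card = i) ∧
      w.card = min (d i) (cnt S i) := by
    intro i
    exact Finset.exists_subset_card_eq (min_le_right _ _)
  choose w hw1 hw2 using hch
  refine ⟨(range (m+1)).biUnion w, ?_, ?_⟩
  · apply Finset.biUnion_subset.2
    intro i _
    exact Finset.Subset.trans (hw1 i) (Finset.filter_subset _ _)
  · intro i hi
    have hfil : ((range (m+1)).biUnion w).filter (fun T => T.card = i) = w i := by
      apply Finset.Subset.antisymm
      · intro T hT
        rw [Finset.mem_filter, Finset.mem_biUnion] at hT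
        obtain ⟨⟨j, _, hTj⟩, hc⟩ := hT
        have := (Finset.mem_filter.1 (hw1 j hTj)).2
        rwa [show j = i by omega] at hTj
      · intro T hT
        rw [Finset.mem_filter, Finset.mem_biUnion]
        exact ⟨⟨i, Finset.mem_range.2 (by omega), hT⟩,
          (Finset.mem_filter.1 (hw1 i hT)).2⟩
    rw [cnt, hfil, hw2, min_eq_left (hd i hi)]

/-! ### the two directions -/

lemma forward_dir {P Q : Polynomial ℤ} (hP : IsPartitionPolynomial P)
    (hdom : Dominates P Q) {A : Set (ℕ → Bool)} (hA : IsClopen A)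
    (hrep : Represents P A) :
    ∃ B : Set (ℕ → Bool), B ⊆ A ∧ IsClopen B ∧ Represents Q B := by
  classical
  obtain ⟨n, a, b, hab, hPf, hQf⟩ := hdom
  obtain ⟨m₀, S, hSr, hAeq⟩ := isClopen_structure hA
  set m := max n m₀ with hm
  obtain ⟨k0, hm0⟩ : ∃ k, m = m₀ + k := ⟨m - m₀, by omega⟩
  obtain ⟨k2, hm2⟩ : ∃ k, m = n + k := ⟨m - n, by omega⟩
  set S' := extend m₀ k0 S with hS'def
  have hS'r : ∀ T ∈ S', T ⊆ range m := by
    rw [hm0]; exact extend_subset_range hSr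
  have hAeq' : A = ESet m S' := by
    rw [hm0, hS'def, ESet_extend _ _ _ hSr]; exact hAeq
  have hwS : wpoly m S' = P := wpoly_eq_of_represents hS'r hP (hAeq' ▸ hrep)
  -- canonical families at level n
  have hαβ : ∀ i ≤ n, (b i).toNat ≤ (a i).toNat := by
    intro i hi
    exact Int.toNat_le_toNat (hab i hi).2.1
  have hα : ∀ i ≤ n, (a i).toNat ≤ n.choose i := by
    intro i hi
    exact Int.toNat_le.2 (hab i hi).2.2
  obtain ⟨W, V, hVW, hWr, hcW, hcV⟩ := exists_canonical n _ _ hαβ hα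
  have hVr : ∀ T ∈ V, T ⊆ range n := fun T hT => hWr T (hVW hT)
  -- wpoly of canonical families
  have hPW : wpoly n W = P := by
    rw [wpoly_eq_bern n W hWr, hPf, partition_eq_bern (fun i hi => (hab i hi).2.1.trans'
      (hab i hi).1)]
    apply bern_congr_le
    intro i hi
    rw [hcW i hi]
  have hQV : wpoly n V = Q := by
    rw [wpoly_eq_bern n V hVr, hQf, partition_eq_bern (fun i hi => (hab i hi).1)]
    apply bern_congr_le
    intro i hi
    rw [hcV i hi]
  -- extend to level m
  set W' := extend n k2 W with hW'def
  set V' := extend n k2 V with hV'def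
  have hW'r : ∀ T ∈ W', T ⊆ range m := by rw [hm2]; exact extend_subset_range hWr
  have hV'r : ∀ T ∈ V', T ⊆ range m := by rw [hm2]; exact extend_subset_range hVr
  have hV'W' : V' ⊆ W' := extend_mono hVW
  have hwW' : wpoly m W' = P := by
    rw [hW'def, hm2, wpoly_extend _ _ _ hWr, hPW]
  have hwV' : wpoly m V' = Q := by
    rw [hV'def, hm2, wpoly_extend _ _ _ hVr, hQV]
  -- counts of S' and W' agree
  have hcnt : ∀ i ≤ m, cnt S' i = cnt W' i := by
    have h1 : bern m (fun i => (cnt S' i : ℤ)) = bern m (fun i => (cnt W' i : ℤ)) := by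
      rw [← wpoly_eq_bern m S' hS'r, ← wpoly_eq_bern m W' hW'r, hwS, hwW']
    intro i hi
    exact_mod_cast bern_inj h1 i hi
  have hd : ∀ i ≤ m, cnt V' i ≤ cnt S' i := by
    intro i hi
    rw [hcnt i hi]
    exact cnt_mono hV'W' i
  obtain ⟨S₀, hS₀S', hS₀c⟩ := exists_sub_family m S' _ hd
  have hS₀r : ∀ T ∈ S₀, T ⊆ range m := fun T hT => hS'r T (hS₀S' hT)
  have hwS₀ : wpoly m S₀ = Q := by
    rw [wpoly_eq_bern m S₀ hS₀r, ← hwV', wpoly_eq_bern m V' hV'r]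
    apply bern_congr_le
    intro i hi
    rw [hS₀c i hi]
  refine ⟨ESet m S₀, ?_, isClopen_ESet m S₀, represents_of_wpoly_eq hS₀r hwS₀⟩
  rw [hAeq']
  exact ESet_mono hS₀S'

lemma backward_dir {P Q : Polynomial ℤ} (hP : IsPartitionPolynomial P)
    (hQ : IsPartitionPolynomial Q)
    (h : ∀ A : Set (ℕ → Bool), IsClopen A → Represents P A →
      ∃ B : Set (ℕ → Bool), B ⊆ A ∧ IsClopen B ∧ Represents Q B) :
    Dominates P Q := by
  classical
  obtain ⟨n, a, ha, hPf⟩ := hP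
  have hα : ∀ i ≤ n, (a i).toNat ≤ n.choose i := by
    intro i hi
    exact Int.toNat_le.2 (ha i hi).2
  obtain ⟨W, -, -, hWr, hcW, -⟩ := exists_canonical n _ _ (fun i _ => le_refl _) hα
  have hPW : wpoly n W = P := by
    rw [wpoly_eq_bern n W hWr, hPf, partition_eq_bern (fun i hi => (ha i hi).1)]
    apply bern_congr_le
    intro i hi
    rw [hcW i hi]
  obtain ⟨B, hBA, hBclopen, hBrep⟩ := h (ESet n W) (isClopen_ESet n W)
    (represents_of_wpoly_eq hWr hPW)
  obtain ⟨m₁, T, hTr, hBeq⟩ := isClopen_structure hBclopen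
  set m := max n m₁ with hm
  obtain ⟨k1, hm1⟩ : ∃ k, m = n + k := ⟨m - n, by omega⟩
  obtain ⟨k2, hm2⟩ : ∃ k, m = m₁ + k := ⟨m - m₁, by omega⟩
  set W' := extend n k1 W with hW'def
  set T' := extend m₁ k2 T with hT'def
  have hW'r : ∀ S ∈ W', S ⊆ range m := by rw [hm1]; exact extend_subset_range hWr
  have hT'r : ∀ S ∈ T', S ⊆ range m := by rw [hm2]; exact extend_subset_range hTr
  have hAeq : ESet n W = ESet m W' := by
    rw [hW'def, hm1, ESet_extend _ _ _ hWr]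
  have hBeq' : B = ESet m T' := by
    rw [hBeq, hT'def, hm2, ESet_extend _ _ _ hTr]
  have hwW' : wpoly m W' = P := by
    rw [hW'def, hm1, wpoly_extend _ _ _ hWr, hPW]
  have hwT' : wpoly m T' = Q := by
    apply wpoly_eq_of_represents hT'r hQ
    rw [← hBeq']
    exact hBrep
  -- T' ⊆ W'
  have hsub : T' ⊆ W' := by
    intro S hS
    have hp : (fun i => decide (i ∈ S)) ∈ B := by
      rw [hBeq']
      exact Set.mem_biUnion hS (gcyl_mem_self m S)
    have hp2 : (fun i => decide (i ∈ S)) ∈ ESet m W' := by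
      rw [← hAeq]
      exact hBA hp
    obtain ⟨S₂, hS₂, hpS₂⟩ := Set.mem_iUnion₂.1 hp2
    have : S = S₂ := eq_of_mem_gcyl (hT'r S hS) (hW'r S₂ hS₂) (gcyl_mem_self m S) hpS₂
    rwa [this]
  refine ⟨m, fun i => (cnt W' i : ℤ), fun i => (cnt T' i : ℤ), ?_, ?_, ?_⟩
  · intro i hi
    refine ⟨by positivity, ?_, ?_⟩
    · show (cnt T' i : ℤ) ≤ (cnt W' i : ℤ)
      exact_mod_cast cnt_mono hsub i
    · show (cnt W' i : ℤ) ≤ (m.choose i : ℤ)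
      exact_mod_cast cnt_le_choose m W' hW'r i
  · rw [← hwW', wpoly_eq_bern m W' hW'r, bern]
  · rw [← hwT', wpoly_eq_bern m T' hT'r, bern]

end DomAux

/-- `P` dominates `Q` iff every clopen set represented by `P`
has a clopen subset represented by `Q`. -/
theorem dominates_iff_subset (P Q : Polynomial ℤ)
    (hP : IsPartitionPolynomial P) (hQ : IsPartitionPolynomial Q) :
    Dominates P Q ↔
      ∀ A : Set (ℕ → Bool), IsClopen A → Represents P A →
        ∃ B : Set (ℕ → Bool), B ⊆ A ∧ IsClopen B ∧ Represents Q B := by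
  constructor
  · intro hdom A hA hrep
    exact DomAux.forward_dir hP hdom hA hrep
  · intro h
    exact DomAux.backward_dir hP hQ h
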